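/- arXiv:1211.6315 — 2 statements merged into one kernel-verified Lean document; each statement's English description precedes it below -/
import Mathlib

section
/- Every locally opaque history is strictly serializable. -/
open scoped Classical

namespace TM

/-- A transactional operation (event), tagged with its transaction identifier.
Values are natural numbers; the initial value of every t-object is `0`.
`read t x none` is a read returning the abort value `A`; `read t x (some v)` is a
successful read returning `v`.  `write t x v` is a successful write, `writeFail t x v`
is a write returning `A`.  `tryCommit t true` returns commit `C`,
`tryCommit t false` returns `A`, and `tryAbort t` returns `A`. -/
inductive Op (Txn Obj : Type) : Type
  | read (t : Txn) (x : Obj) (v : Option ℕ)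
  | write (t : Txn) (x : Obj) (v : ℕ)
  | writeFail (t : Txn) (x : Obj) (v : ℕ)
  | tryCommit (t : Txn) (ok : Bool)
  | tryAbort (t : Txn)

variable {Txn Obj : Type}

/-- The transaction of an operation. -/
def Op.txn : Op Txn Obj → Txn
  | .read t _ _ => t
  | .write t _ _ => t
  | .writeFail t _ _ => t
  | .tryCommit t _ => t
  | .tryAbort t => t

/-- Is this operation a read operation? -/
def Op.isRead : Op Txn Obj → Prop
  | .read _ _ _ => True
  | _ => False

/-- Does this operation return the abort value `A`? -/
def Op.aborting : Op Txn Obj → Prop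
  | .read _ _ none => True
  | .writeFail _ _ _ => True
  | .tryCommit _ false => True
  | .tryAbort _ => True
  | _ => False

/-- A history is a (sequential) finite sequence of transactional operations. -/
abbrev History (Txn Obj : Type) : Type := List (Op Txn Obj)

/-- The set of transactions having an event in `H`. -/
def txnsOf (H : History Txn Obj) : Set Txn := {t | ∃ o ∈ H, o.txn = t}

/-- `t` is committed in `H`: its tryCommit returned `C`. -/
def committed (H : History Txn Obj) (t : Txn) : Prop := Op.tryCommit t true ∈ H

/-- `t` is aborted in `H`: some operation of `t` returned `A`. -/
def aborted (H : History Txn Obj) (t : Txn) : Prop := ∃ o ∈ H, o.txn = t ∧ o.aborting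

/-- `t` is complete in `H` (committed or aborted). -/
def complete (H : History Txn Obj) (t : Txn) : Prop := committed H t ∨ aborted H t

/-- `t` is incomplete in `H`: it has an event but is neither committed nor aborted. -/
def incomplete (H : History Txn Obj) (t : Txn) : Prop := t ∈ txnsOf H ∧ ¬ complete H t

/-- Two histories are equivalent if they have the same (multi)set of events. -/
def equivalentH (H1 H2 : History Txn Obj) : Prop := H1.Perm H2

/-- `x` belongs to the write set of `t` in `H`. -/
def writesTo (H : History Txn Obj) (t : Txn) (x : Obj) : Prop := ∃ v, Op.write t x v ∈ H

/-- Real-time order: `t` is complete and every event of `t` precedes every event of `u`. -/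
def rtPrec (H : History Txn Obj) (t u : Txn) : Prop :=
  t ∈ txnsOf H ∧ u ∈ txnsOf H ∧ complete H t ∧
    ∀ (i j : ℕ) (a b : Op Txn Obj), H[i]? = some a → a.txn = t → H[j]? = some b → b.txn = u → i < j

/-- `H` is t-sequential: every two distinct transactions are related by real-time order. -/
def tSequential (H : History Txn Obj) : Prop :=
  ∀ t ∈ txnsOf H, ∀ u ∈ txnsOf H, t ≠ u → rtPrec H t u ∨ rtPrec H u t

/-- Conflict order `t ≺_H^CO u`: (w-w) `t`'s commit precedes `u`'s commit and their
write sets intersect; (w-r) `t`'s commit precedes a successful read by `u` of an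
object in `t`'s write set; (r-w) a successful read by `t` of an object in `u`'s
write set precedes `u`'s commit. -/
def coPrec (H : History Txn Obj) (t u : Txn) : Prop :=
  (∃ i j : ℕ, i < j ∧ H[i]? = some (Op.tryCommit t true) ∧ H[j]? = some (Op.tryCommit u true) ∧
    ∃ x, writesTo H t x ∧ writesTo H u x) ∨
  (∃ (i j : ℕ) (x : Obj) (v : ℕ), i < j ∧ H[i]? = some (Op.tryCommit t true) ∧
    H[j]? = some (Op.read u x (some v)) ∧ writesTo H t x) ∨
  (∃ (i j : ℕ) (x : Obj) (v : ℕ), i < j ∧ H[i]? = some (Op.read t x (some v)) ∧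
    H[j]? = some (Op.tryCommit u true) ∧ writesTo H u x)

/-- The successful read of `x` returning `v` occurring at position `j` of `H` is legal:
either the transaction of its last write (the latest preceding commit of a transaction
writing to `x`) wrote `v` to `x`, or there is no such committed writer and `v` is the
initial value `0` (written by the initial transaction `T₀`). -/
def readLegalAt (H : History Txn Obj) (j : ℕ) (x : Obj) (v : ℕ) : Prop :=
  (∃ (i : ℕ) (u : Txn), i < j ∧ H[i]? = some (Op.tryCommit u true) ∧ writesTo H u x ∧
    Op.write u x v ∈ H ∧
    ∀ (i' : ℕ) (u' : Txn), i < i' → i' < j → H[i']? = some (Op.tryCommit u' true) → ¬ writesTo H u' x) ∨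
  ((∀ (i : ℕ) (u : Txn), i < j → H[i]? = some (Op.tryCommit u true) → ¬ writesTo H u x) ∧ v = 0)

/-- `H` is legal if all its successful reads are legal. -/
def legalH (H : History Txn Obj) : Prop :=
  ∀ (j : ℕ) (t : Txn) (x : Obj) (v : ℕ), H[j]? = some (Op.read t x (some v)) → readLegalAt H j x v

/-- `H` is valid: every successful read returns a value written to the object by a
transaction committed before the read (or the initial value `0` written by `T₀`). -/
def validH (H : History Txn Obj) : Prop :=
  ∀ (j : ℕ) (t : Txn) (x : Obj) (v : ℕ), H[j]? = some (Op.read t x (some v)) →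
    (∃ (i : ℕ) (u : Txn), i < j ∧ H[i]? = some (Op.tryCommit u true) ∧ Op.write u x v ∈ H) ∨ v = 0

/-- The completion `H̄` of `H`: an abort event is inserted immediately after the last
event of every incomplete transaction. -/
noncomputable def completion (H : History Txn Obj) : History Txn Obj :=
  ((List.range H.length).map fun i =>
    match H[i]? with
    | none => ([] : History Txn Obj)
    | some o =>
      if incomplete H o.txn ∧ ∀ (j : ℕ) (b : Op Txn Obj), i < j → H[j]? = some b → b.txn ≠ o.txn
      then [o, Op.tryAbort o.txn] else [o]).flatten

/-- `S` respects the real-time order of `H`. -/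
def respectsRT (H S : History Txn Obj) : Prop := ∀ t u, rtPrec H t u → rtPrec S t u

/-- `S` respects the conflict order of `H`. -/
def respectsCO (H S : History Txn Obj) : Prop := ∀ t u, coPrec H t u → coPrec S t u

/-- `H` is opaque: `H` is valid and there is a legal t-sequential history `S`
equivalent to `H̄` respecting the real-time order of `H`. -/
def opaqueH (H : History Txn Obj) : Prop :=
  validH H ∧ ∃ S : History Txn Obj,
    equivalentH S (completion H) ∧ tSequential S ∧ legalH S ∧ respectsRT H S

/-- `H` is conflict opaque: `H` is valid and there is a legal t-sequential history `S`
equivalent to `H̄` respecting both the real-time and the conflict order of `H`. -/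
def coOpaqueH (H : History Txn Obj) : Prop :=
  validH H ∧ ∃ S : History Txn Obj,
    equivalentH S (completion H) ∧ tSequential S ∧ legalH S ∧ respectsRT H S ∧ respectsCO H S

/-- `H^t`: the shortest prefix of `H` containing all events of `t`. -/
noncomputable def prefixUpTo (H : History Txn Obj) (t : Txn) : History Txn Obj :=
  H.take (H.length - H.reverse.findIdx fun o => decide (o.txn = t))

/-- The sub-history of `H` consisting of all events of transactions in `S`. -/
noncomputable def restrictTo (H : History Txn Obj) (S : Set Txn) : History Txn Obj :=
  H.filter fun o => decide (o.txn ∈ S)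

/-- `H₋R`: the sub-history of `H` with all events of transactions in `R` removed. -/
noncomputable def removeTxns (H : History Txn Obj) (R : Set Txn) : History Txn Obj :=
  H.filter fun o => decide (o.txn ∉ R)

/-- The local sub-history `sub(t,H)`: the sub-history of `H^t` consisting of the events
of all transactions committed in `H^t` together with the applicable events of `t`
(all events of `t` if `t` is committed; only its read operations otherwise). -/
noncomputable def localSub (H : History Txn Obj) (t : Txn) : History Txn Obj :=
  (prefixUpTo H t).filter fun o =>
    decide (committed (prefixUpTo H t) o.txn ∨ (o.txn = t ∧ o.isRead))

/-- `o'` is the non-aborting variant of the aborting operation `o`: `r(x,A)` becomes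
`r(x,v)` for some value `v`, `w(x,v,A)` becomes `w(x,v)`, `tryC(A)` becomes `tryC(C)`. -/
def commitVariant : Op Txn Obj → Op Txn Obj → Prop
  | Op.read t x none, o' => ∃ v, o' = Op.read t x (some v)
  | Op.writeFail t x v, o' => o' = Op.write t x v
  | Op.tryCommit t false, o' => o' = Op.tryCommit t true
  | _, _ => False

/-- `ℋ^{t,C}`: the set of histories obtained from `H^t` by replacing the last
(aborting) operation of `t` with a corresponding non-aborting operation. -/
def HTC (H : History Txn Obj) (t : Txn) : Set (History Txn Obj) :=
  {H' | ∃ pre o o', prefixUpTo H t = pre ++ [o] ∧ Op.txn o = t ∧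
    commitVariant o o' ∧ H' = pre ++ [o']}

/-- `ℋ^{t,C}₋R`: the histories of `ℋ^{t,C}` with all events of transactions in `R` removed. -/
def HTCminus (H : History Txn Obj) (t : Txn) (R : Set Txn) : Set (History Txn Obj) :=
  {K | ∃ H' ∈ HTC H t, K = removeTxns H' R}

/-- `prevAb(t,H)`: the transactions that aborted before `t`'s terminal operation or are
incomplete when `t` aborted. -/
def prevAb (H : History Txn Obj) (t : Txn) : Set Txn :=
  {u | aborted (prefixUpTo H t).dropLast u ∨ incomplete (prefixUpTo H t) u}

/-- `Perm(P)`: `H ∈ P` and no aborted transaction of `H` can be turned into a committed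
one while preserving `P`. -/
def permissive (P : Set (History Txn Obj)) : Set (History Txn Obj) :=
  {H | H ∈ P ∧ ∀ t, aborted H t → ∀ H' ∈ HTC H t, H' ∉ P}

/-- `NI(P)`: `H ∈ P` and for every aborted transaction `t` of `H`, no removal of a
subset of `prevAb(t,H)` allows turning `t` into a committed transaction preserving `P`. -/
def nonInterfering (P : Set (History Txn Obj)) : Set (History Txn Obj) :=
  {H | H ∈ P ∧ ∀ t, aborted H t → ∀ R ⊆ prevAb H t, ∀ H' ∈ HTCminus H t R, H' ∉ P}

/-- A correctness criterion `P` is local if membership of a history in `P` is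
equivalent to membership of all its local sub-histories. -/
def IsLocal (P : Set (History Txn Obj)) : Prop :=
  ∀ H : History Txn Obj, H ∈ P ↔ ∀ t ∈ txnsOf H, localSub H t ∈ P

/-- `H` is locally opaque: every local sub-history is opaque. -/
def locallyOpaque (H : History Txn Obj) : Prop := ∀ t ∈ txnsOf H, opaqueH (localSub H t)

/-- `H` is conflict locally opaque: every local sub-history is conflict opaque. -/
def confLocallyOpaque (H : History Txn Obj) : Prop :=
  ∀ t ∈ txnsOf H, coOpaqueH (localSub H t)

/-- `H` is strictly serializable: `H` is valid and the sub-history of its committed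
transactions is opaque. -/
def strictlySerializable (H : History Txn Obj) : Prop :=
  validH H ∧ opaqueH (restrictTo H {u | committed H u})

/-- The edge relation of the conflict graph `CG(H)`: real-time or conflict order. -/
def cgEdge (H : History Txn Obj) (t u : Txn) : Prop := rtPrec H t u ∨ coPrec H t u

/-- The conflict graph `CG(H)` is acyclic: no directed cycle. -/
def cgAcyclic (H : History Txn Obj) : Prop := ∀ t, ¬ Relation.TransGen (cgEdge H) t t

/-- `t` causally precedes `u` (one step): same process and real-time precedence, or
`u` reads a value written by the committed transaction `t`. -/
def causalBase {Proc : Type} (proc : Txn → Proc) (H : History Txn Obj) (t u : Txn) : Prop :=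
  (proc t = proc u ∧ rtPrec H t u) ∨
  (committed H t ∧ ∃ (x : Obj) (v : ℕ), Op.write t x v ∈ H ∧ Op.read u x (some v) ∈ H)

/-- The causal past `CP(t)`: all transactions causally preceding `t`, together with `t`. -/
def causalPast {Proc : Type} (proc : Txn → Proc) (H : History Txn Obj) (t : Txn) : Set Txn :=
  {u | Relation.TransGen (causalBase proc H) u t} ∪ {t}

/-- Virtual world consistency: the sub-history of committed transactions is opaque and
the restriction of `H` to the causal past of every transaction is opaque. -/
def VWC {Proc : Type} (proc : Txn → Proc) (H : History Txn Obj) : Prop :=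
  opaqueH (restrictTo H {u | committed H u}) ∧
  ∀ t ∈ txnsOf H, opaqueH (restrictTo H (causalPast proc H t))

/-- The liveSet of `t` in `H`: the transactions incomplete at the point of `t`'s last event. -/
def liveSet (H : History Txn Obj) (t : Txn) : Set Txn := {u | incomplete (prefixUpTo H t) u}

/-- A complete transaction `t` is obsolete in `H` if every transaction of its liveSet
has terminated in `H`. -/
def obsolete (H : History Txn Obj) (t : Txn) : Prop :=
  complete H t ∧ ∀ u ∈ liveSet H t, complete H u

/-- `obs(H,U)` (for `U` generated by the obsolete transaction `t`): the (shortest)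
prefix of `H` in which all transactions of `liveSet(t)` are complete. -/
noncomputable def obsPrefix (H : History Txn Obj) (t : Txn) : History Txn Obj :=
  H.take (sInf {n : ℕ | ∀ u ∈ liveSet H t, complete (H.take n) u})

/-- `u` is the last transaction of `U` to commit a write to `x` in `H`. -/
def lastCommitterFor (H : History Txn Obj) (U : Set Txn) (x : Obj) (u : Txn) : Prop :=
  u ∈ U ∧ writesTo H u x ∧ committed H u ∧
  ∀ u' ∈ U, u' ≠ u → writesTo H u' x → committed H u' →
    ∃ i j : ℕ, i < j ∧ H[i]? = some (Op.tryCommit u' true) ∧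
      H[j]? = some (Op.tryCommit u true)

/-- Which events survive the trimming of the transactions of `U`: all events of
transactions outside `U`; of a transaction in `U`, only its write events to objects
for which it is the last committer in `U`, and its commit event if it is the last
committer in `U` for some object. -/
def keepInTrim (H : History Txn Obj) (U : Set Txn) : Op Txn Obj → Prop
  | Op.write u x _ => u ∉ U ∨ lastCommitterFor H U x u
  | Op.tryCommit u b => u ∉ U ∨ (b = true ∧ ∃ x : Obj, lastCommitterFor H U x u)
  | o => Op.txn o ∉ U

/-- `trim(H,U)`: remove all read events of transactions in `U`; for each t-object keep
only the write and commit events of the last transaction in `U` to commit a write to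
it; remove all events of the other transactions of `U`. -/
noncomputable def trim (H : History Txn Obj) (U : Set Txn) : History Txn Obj :=
  H.filter fun o => decide (keepInTrim H U o)

end TM

section Aux

private lemma filter_pos {α : Type*} (L : List α) (p : α → Bool) (j : ℕ) (a : α)
    (hj : L[j]? = some a) (hp : p a = true) :
    ∃ j', (L.filter p)[j']? = some a ∧
      ∀ (i' : ℕ) (b : α), i' < j' → (L.filter p)[i']? = some b → ∃ i : ℕ, i < j ∧ L[i]? = some b := by
  obtain ⟨hlen, hja⟩ := List.getElem?_eq_some_iff.mp hj
  have hsplit : L.filter p = (L.take j).filter p ++ (L.drop j).filter p := by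
    conv_lhs => rw [← List.take_append_drop j L, List.filter_append]
  refine ⟨((L.take j).filter p).length, ?_, ?_⟩
  · have hdrop : L.drop j = a :: L.drop (j + 1) := by
      rw [List.drop_eq_getElem_cons hlen, hja]
    rw [hsplit, List.getElem?_append_right (le_refl _), Nat.sub_self, hdrop]
    simp [List.filter_cons, hp]
  · intro i' b hi' hb
    rw [hsplit, List.getElem?_append, if_pos hi'] at hb
    have hmem : b ∈ (L.take j).filter p := List.mem_iff_getElem?.mpr ⟨i', hb⟩
    have hmem2 : b ∈ L.take j := List.filter_sublist.mem hmem
    obtain ⟨i, hi, hbi⟩ := List.mem_iff_getElem.mp hmem2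
    have hi2 := hi
    rw [List.length_take] at hi2
    have hij : i < j := by omega
    have hiL : i < L.length := by omega
    refine ⟨i, hij, ?_⟩
    rw [List.getElem_take] at hbi
    rw [List.getElem?_eq_getElem hiL, hbi]

private lemma getElem?_prefixUpTo {Txn Obj : Type} (H : TM.History Txn Obj) (t : Txn)
    (j : ℕ) (o : TM.Op Txn Obj) (hj : H[j]? = some o) (ht : o.txn = t) :
    (TM.prefixUpTo H t)[j]? = some o := by
  obtain ⟨hlen, hja⟩ := List.getElem?_eq_some_iff.mp hj
  have hfind : H.reverse.findIdx (fun o => decide (o.txn = t)) ≤ H.length - 1 - j := by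
    by_contra hc
    push_neg at hc
    have h1 : H.length - 1 - j < H.reverse.length := by
      rw [List.length_reverse]; omega
    have hfalse := List.not_of_lt_findIdx hc
    rw [List.getElem_reverse] at hfalse
    have hidx : H.length - 1 - (H.length - 1 - j) = j := by omega
    simp only [hidx] at hfalse
    rw [hja] at hfalse
    simp [ht] at hfalse
  unfold TM.prefixUpTo
  rw [List.getElem?_take, if_pos (by omega)]
  exact hj

end Aux

/-- Every locally opaque history is strictly serializable. -/
theorem strictSer_of_lo (Txn Obj : Type) (H : TM.History Txn Obj)
    (h : TM.locallyOpaque H) : TM.strictlySerializable H := by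
  constructor
  · -- validH H
    intro j t x v hread
    have htt : t ∈ TM.txnsOf H :=
      ⟨_, List.mem_iff_getElem?.mpr ⟨j, hread⟩, rfl⟩
    have hP := getElem?_prefixUpTo H t j _ hread rfl
    have hp : (fun o => decide (TM.committed (TM.prefixUpTo H t) o.txn ∨
        (o.txn = t ∧ o.isRead))) (TM.Op.read t x (some v)) = true := by
      simp [TM.Op.txn, TM.Op.isRead]
    obtain ⟨j', hj', hback⟩ := filter_pos (TM.prefixUpTo H t)
      (fun o => decide (TM.committed (TM.prefixUpTo H t) o.txn ∨ (o.txn = t ∧ o.isRead)))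
      j (TM.Op.read t x (some v)) hP hp
    have hval := (h t htt).1
    unfold TM.localSub at hval
    rcases hval j' t x v hj' with ⟨i', u, hi'lt, hci', hwmem⟩ | hv0
    · obtain ⟨i, hij, hiH⟩ := hback i' _ hi'lt hci'
      have hiH' : H[i]? = some (TM.Op.tryCommit u true) := by
        unfold TM.prefixUpTo at hiH
        rw [List.getElem?_take] at hiH
        split at hiH
        · exact hiH
        · simp at hiH
      have hsub : (((TM.prefixUpTo H t)).filter (fun o =>
          decide (TM.committed (TM.prefixUpTo H t) o.txn ∨ (o.txn = t ∧ o.isRead)))).Sublist H := by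
        unfold TM.prefixUpTo
        exact List.filter_sublist.trans (List.take_sublist _ _)
      exact Or.inl ⟨i, u, hij, hiH', hsub.mem hwmem⟩
    · exact Or.inr hv0
  · -- opaqueH (restrictTo H committed)
    by_cases hex : ∃ (i : ℕ) (o : TM.Op Txn Obj), H[i]? = some o ∧ TM.committed H o.txn
    · obtain ⟨i0, o0, hi0, hc0⟩ := hex
      have hi0len : i0 < H.length := (List.getElem?_eq_some_iff.mp hi0).1
      have hPk : ∃ o : TM.Op Txn Obj, H[Nat.findGreatest
          (fun i => ∃ o : TM.Op Txn Obj, H[i]? = some o ∧ TM.committed H o.txn) H.length]? = some o ∧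
          TM.committed H o.txn :=
        Nat.findGreatest_spec (P := fun i => ∃ o : TM.Op Txn Obj, H[i]? = some o ∧ TM.committed H o.txn) (le_of_lt hi0len) ⟨o0, hi0, hc0⟩
      set k := Nat.findGreatest (fun i => ∃ o : TM.Op Txn Obj, H[i]? = some o ∧ TM.committed H o.txn)
        H.length with hkdef
      obtain ⟨ok, hk, hck⟩ := hPk
      have hklen : k < H.length := (List.getElem?_eq_some_iff.mp hk).1
      have hmax : ∀ i o, k < i → H[i]? = some o → ¬ TM.committed H o.txn := by
        intro i o hki hio hc
        have hilen : i < H.length := (List.getElem?_eq_some_iff.mp hio).1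
        exact Nat.findGreatest_is_greatest hki (le_of_lt hilen) ⟨o, hio, hc⟩
      set t' := ok.txn with ht'def
      have hfind : H.reverse.findIdx (fun o => decide (o.txn = t')) = H.length - 1 - k := by
        rw [List.findIdx_eq (by rw [List.length_reverse]; omega)]
        constructor
        · rw [List.getElem_reverse]
          have hidx : H.length - 1 - (H.length - 1 - k) = k := by omega
          simp only [hidx]
          rw [(List.getElem?_eq_some_iff.mp hk).2]
          simp [ht'def]
        · intro jj hjj
          rw [List.getElem_reverse]
          have hki : k < H.length - 1 - jj := by omega
          have hilen : H.length - 1 - jj < H.length := by omega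
          have hnc := hmax _ _ hki (List.getElem?_eq_getElem hilen)
          simp only [decide_eq_false_iff_not]
          intro hteq
          exact hnc (by rw [hteq]; exact hck)
      have hpre : TM.prefixUpTo H t' = H.take (k + 1) := by
        unfold TM.prefixUpTo
        rw [hfind]
        congr 1
        omega
      have hcomm : ∀ u, TM.committed H u ↔ TM.committed (H.take (k + 1)) u := by
        intro u
        constructor
        · intro hu
          obtain ⟨i, hi⟩ := List.mem_iff_getElem?.mp hu
          have hik : i ≤ k := by
            by_contra hc
            exact hmax i _ (by omega) hi hu
          exact List.mem_iff_getElem?.mpr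
            ⟨i, by rw [List.getElem?_take, if_pos (by omega)]; exact hi⟩
        · intro hu
          exact (List.take_sublist _ _).mem hu
      have hloc : TM.localSub H t' = TM.restrictTo H {u | TM.committed H u} := by
        unfold TM.localSub TM.restrictTo
        rw [hpre]
        conv_rhs => rw [← List.take_append_drop (k + 1) H, List.filter_append]
        rw [List.take_append_drop]
        have hdrop : (H.drop (k + 1)).filter
            (fun o => decide (o.txn ∈ {u | TM.committed H u})) = [] := by
          rw [List.filter_eq_nil_iff]
          intro a ha
          obtain ⟨i, hi, hai⟩ := List.mem_iff_getElem.mp ha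
          have hi2 := hi
          rw [List.length_drop] at hi2
          rw [List.getElem_drop] at hai
          have hsome : H[(k + 1) + i]? = some a := by
            rw [List.getElem?_eq_getElem (by omega), hai]
          simp only [decide_eq_true_eq, Set.mem_setOf_eq]
          exact hmax _ _ (by omega) hsome
        rw [hdrop, List.append_nil]
        apply List.filter_congr
        intro o ho
        rw [decide_eq_decide]
        simp only [Set.mem_setOf_eq]
        constructor
        · rintro (hc | ⟨hot, -⟩)
          · exact (hcomm o.txn).mpr hc
          · rw [hot]; exact hck
        · intro hc
          exact Or.inl ((hcomm o.txn).mp hc)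
      have ht'mem : t' ∈ TM.txnsOf H := ⟨ok, List.mem_iff_getElem?.mpr ⟨k, hk⟩, rfl⟩
      have hop := h t' ht'mem
      rwa [hloc] at hop
    · have hnil : TM.restrictTo H {u | TM.committed H u} = [] := by
        unfold TM.restrictTo
        rw [List.filter_eq_nil_iff]
        intro a ha
        obtain ⟨i, hi⟩ := List.mem_iff_getElem?.mp ha
        push_neg at hex
        simp only [decide_eq_true_eq, Set.mem_setOf_eq]
        exact hex i a hi
      rw [hnil]
      refine ⟨?_, [], ?_, ?_, ?_, ?_⟩
      · intro j t x v hj; simp at hj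
      · simp [TM.equivalentH, TM.completion]
      · intro t htm; simp [TM.txnsOf] at htm
      · intro j t x v hj; simp at hj
      · intro t u hr
        obtain ⟨ht, -⟩ := hr
        simp [TM.txnsOf] at ht
end

section
/- Non-interference with respect to opacity is strictly stronger than permissiveness with respect to opacity: there exists a history H that is permissive with respect to opacity (H ∈ Perm(opacity)) but is not opacity-non-interfering (H ∉ NI(opacity)); hence NI(opacity) is a strict subset of Perm(opacity). -/
open scoped Classical

namespace TM

deriving instance DecidableEq for Op

instance : ∀ o : Op ℕ ℕ, Decidable o.aborting
  | .read _ _ none => .isTrue trivial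
  | .read _ _ (some _) => .isFalse id
  | .write _ _ _ => .isFalse id
  | .writeFail _ _ _ => .isTrue trivial
  | .tryCommit _ true => .isFalse id
  | .tryCommit _ false => .isTrue trivial
  | .tryAbort _ => .isTrue trivial

instance (t : ℕ) (H : History ℕ ℕ) : Decidable (t ∈ txnsOf H) :=
  decidable_of_iff (∃ o ∈ H, o.txn = t) Iff.rfl

instance (H : History ℕ ℕ) (t : ℕ) : Decidable (committed H t) :=
  inferInstanceAs (Decidable (_ ∈ _))

instance (H : History ℕ ℕ) (t : ℕ) : Decidable (aborted H t) :=
  inferInstanceAs (Decidable (∃ o ∈ H, _ ∧ _))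

instance (H : History ℕ ℕ) (t : ℕ) : Decidable (complete H t) :=
  inferInstanceAs (Decidable (_ ∨ _))

instance (H : History ℕ ℕ) (t : ℕ) : Decidable (incomplete H t) :=
  inferInstanceAs (Decidable (_ ∧ _))

lemma forall_idx {H : History ℕ ℕ} {P : ℕ → Op ℕ ℕ → Prop} :
    (∀ i a, H[i]? = some a → P i a) ↔ ∀ i, ∀ h : i < H.length, P i H[i] := by
  constructor
  · intro h i hi
    exact h i _ (List.getElem?_eq_getElem hi)
  · intro h i a ha
    obtain ⟨hi, rfl⟩ := List.getElem?_eq_some_iff.1 ha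
    exact h i hi

def rtPrecD (H : History ℕ ℕ) (t u : ℕ) : Prop :=
  t ∈ txnsOf H ∧ u ∈ txnsOf H ∧ complete H t ∧
    ∀ i, ∀ _ : i < H.length, ∀ j, ∀ _ : j < H.length,
      (H[i]).txn = t → (H[j]).txn = u → i < j

instance (H : History ℕ ℕ) (t u : ℕ) : Decidable (rtPrecD H t u) := by
  unfold rtPrecD; infer_instance

lemma rtPrec_iff (H : History ℕ ℕ) (t u : ℕ) : rtPrec H t u ↔ rtPrecD H t u := by
  unfold rtPrec rtPrecD
  refine and_congr_right fun _ => and_congr_right fun _ => and_congr_right fun _ => ?_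
  constructor
  · intro h i hi j hj hit hjt
    exact h i j _ _ (List.getElem?_eq_getElem hi) hit (List.getElem?_eq_getElem hj) hjt
  · intro h i j a b ha hat hb hbt
    obtain ⟨hi, rfl⟩ := List.getElem?_eq_some_iff.1 ha
    obtain ⟨hj, rfl⟩ := List.getElem?_eq_some_iff.1 hb
    exact h i hi j hj hat hbt

example : rtPrecD [Op.write 2 0 1, Op.tryCommit 2 true, Op.read 4 0 (some 1)] 2 4 := by decide


lemma tSequential_iff (S : History ℕ ℕ) :
    tSequential S ↔ ∀ o ∈ S, ∀ o' ∈ S, o.txn ≠ o'.txn →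
      rtPrecD S o.txn o'.txn ∨ rtPrecD S o'.txn o.txn := by
  unfold tSequential
  constructor
  · intro h o ho o' ho' hne
    simpa [← rtPrec_iff] using h o.txn ⟨o, ho, rfl⟩ o'.txn ⟨o', ho', rfl⟩ hne
  · rintro h t ⟨o, ho, rfl⟩ u ⟨o', ho', rfl⟩ hne
    simpa [rtPrec_iff] using h o ho o' ho' hne

lemma respectsRT_iff (H S : History ℕ ℕ) :
    respectsRT H S ↔ ∀ o ∈ H, ∀ o' ∈ H, rtPrecD H o.txn o'.txn → rtPrecD S o.txn o'.txn := by
  unfold respectsRT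
  constructor
  · intro h o _ o' _ hp
    simpa [← rtPrec_iff] using h o.txn o'.txn ((rtPrec_iff _ _ _).2 hp)
  · intro h t u hp
    obtain ⟨o, ho, rfl⟩ := hp.1
    obtain ⟨o', ho', rfl⟩ := hp.2.1
    simpa [rtPrec_iff] using h o ho o' ho' ((rtPrec_iff _ _ _).1 hp)

lemma mem_completion_of_mem {H : History ℕ ℕ} {o : Op ℕ ℕ} (h : o ∈ H) :
    o ∈ completion H := by
  obtain ⟨i, hi, rfl⟩ := List.getElem_of_mem h
  rw [completion, List.mem_flatten]
  refine ⟨_, List.mem_map_of_mem (List.mem_range.2 hi), ?_⟩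
  rw [List.getElem?_eq_getElem hi]
  split
  · next heq => exact absurd heq (by simp)
  · next a heq =>
    obtain rfl : a = H[i] := by injection heq with h; exact h.symm
    split <;> simp

lemma of_mem_completion {H : History ℕ ℕ} {o : Op ℕ ℕ} (h : o ∈ completion H) :
    o ∈ H ∨ ∃ t, o = Op.tryAbort t := by
  rw [completion, List.mem_flatten] at h
  obtain ⟨l, hl, hol⟩ := h
  obtain ⟨i, -, rfl⟩ := List.mem_map.1 hl
  split at hol
  · exact absurd hol (by simp)
  · next a ha =>
    have ham : a ∈ H := by
      obtain ⟨hi, rfl⟩ := List.getElem?_eq_some_iff.1 ha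
      exact List.getElem_mem hi
    split at hol <;> simp at hol
    · rcases hol with rfl | rfl
      · exact Or.inl ham
      · exact Or.inr ⟨_, rfl⟩
    · exact Or.inl (hol ▸ ham)


/-- witness history -/
def Hw : History ℕ ℕ :=
  [Op.read 3 0 (some 0), Op.write 2 0 1, Op.tryCommit 2 true,
   Op.read 4 0 (some 1), Op.read 4 1 (some 0), Op.write 3 1 1, Op.tryCommit 3 false]

def Hw' : History ℕ ℕ :=
  [Op.read 3 0 (some 0), Op.write 2 0 1, Op.tryCommit 2 true,
   Op.read 4 0 (some 1), Op.read 4 1 (some 0), Op.write 3 1 1, Op.tryCommit 3 true]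

def Hw'' : History ℕ ℕ :=
  [Op.read 3 0 (some 0), Op.write 2 0 1, Op.tryCommit 2 true,
   Op.write 3 1 1, Op.tryCommit 3 true]

def CHw : History ℕ ℕ :=
  [Op.read 3 0 (some 0), Op.write 2 0 1, Op.tryCommit 2 true,
   Op.read 4 0 (some 1), Op.read 4 1 (some 0), Op.tryAbort 4,
   Op.write 3 1 1, Op.tryCommit 3 false]

lemma compHw : completion Hw = CHw := by
  rw [completion]
  have hr : List.range (List.length Hw) = [0,1,2,3,4,5,6] := rfl
  rw [hr]
  simp only [List.map_cons, List.map_nil,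
    show Hw[0]? = some (Op.read 3 0 (some 0)) from rfl,
    show Hw[1]? = some (Op.write 2 0 1) from rfl,
    show Hw[2]? = some (Op.tryCommit 2 true) from rfl,
    show Hw[3]? = some (Op.read 4 0 (some 1)) from rfl,
    show Hw[4]? = some (Op.read 4 1 (some 0)) from rfl,
    show Hw[5]? = some (Op.write 3 1 1) from rfl,
    show Hw[6]? = some (Op.tryCommit 3 false) from rfl]
  have c0 : ¬(incomplete Hw ((Op.read 3 0 (some 0) : Op ℕ ℕ)).txn ∧
      ∀ (j : ℕ) (b : Op ℕ ℕ), 0 < j → Hw[j]? = some b → b.txn ≠ ((Op.read 3 0 (some 0) : Op ℕ ℕ)).txn) :=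
    fun h => absurd h.1 (by decide)
  have c1 : ¬(incomplete Hw ((Op.write 2 0 1 : Op ℕ ℕ)).txn ∧
      ∀ (j : ℕ) (b : Op ℕ ℕ), 1 < j → Hw[j]? = some b → b.txn ≠ ((Op.write 2 0 1 : Op ℕ ℕ)).txn) :=
    fun h => absurd h.1 (by decide)
  have c2 : ¬(incomplete Hw ((Op.tryCommit 2 true : Op ℕ ℕ)).txn ∧
      ∀ (j : ℕ) (b : Op ℕ ℕ), 2 < j → Hw[j]? = some b → b.txn ≠ ((Op.tryCommit 2 true : Op ℕ ℕ)).txn) :=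
    fun h => absurd h.1 (by decide)
  have c3 : ¬(incomplete Hw ((Op.read 4 0 (some 1) : Op ℕ ℕ)).txn ∧
      ∀ (j : ℕ) (b : Op ℕ ℕ), 3 < j → Hw[j]? = some b → b.txn ≠ ((Op.read 4 0 (some 1) : Op ℕ ℕ)).txn) :=
    fun h => h.2 4 (Op.read 4 1 (some 0)) (by omega) rfl rfl
  have c4 : incomplete Hw ((Op.read 4 1 (some 0) : Op ℕ ℕ)).txn ∧
      ∀ (j : ℕ) (b : Op ℕ ℕ), 4 < j → Hw[j]? = some b → b.txn ≠ ((Op.read 4 1 (some 0) : Op ℕ ℕ)).txn := by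
    refine ⟨by decide, ?_⟩
    intro j b h4 hjb
    have hj : j < 7 := (List.getElem?_eq_some_iff.1 hjb).1
    interval_cases j
    · obtain rfl : b = Op.write 3 1 1 := by simpa [Hw] using hjb.symm
      decide
    · obtain rfl : b = Op.tryCommit 3 false := by simpa [Hw] using hjb.symm
      decide
  have c5 : ¬(incomplete Hw ((Op.write 3 1 1 : Op ℕ ℕ)).txn ∧
      ∀ (j : ℕ) (b : Op ℕ ℕ), 5 < j → Hw[j]? = some b → b.txn ≠ ((Op.write 3 1 1 : Op ℕ ℕ)).txn) :=
    fun h => absurd h.1 (by decide)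
  have c6 : ¬(incomplete Hw ((Op.tryCommit 3 false : Op ℕ ℕ)).txn ∧
      ∀ (j : ℕ) (b : Op ℕ ℕ), 6 < j → Hw[j]? = some b → b.txn ≠ ((Op.tryCommit 3 false : Op ℕ ℕ)).txn) :=
    fun h => absurd h.1 (by decide)
  rw [if_neg c0, if_neg c1, if_neg c2, if_neg c3, if_pos c4, if_neg c5, if_neg c6]
  rfl


/-- serialization of (the completion of) Hw -/
def SHw : History ℕ ℕ :=
  [Op.read 3 0 (some 0), Op.write 3 1 1, Op.tryCommit 3 false,
   Op.write 2 0 1, Op.tryCommit 2 true,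
   Op.read 4 0 (some 1), Op.read 4 1 (some 0), Op.tryAbort 4]

/-- serialization of Hw'' -/
def SHw'' : History ℕ ℕ :=
  [Op.read 3 0 (some 0), Op.write 3 1 1, Op.tryCommit 3 true,
   Op.write 2 0 1, Op.tryCommit 2 true]

lemma compHw'' : completion Hw'' = Hw'' := by
  rw [completion]
  have hr : List.range (List.length Hw'') = [0,1,2,3,4] := rfl
  rw [hr]
  simp only [List.map_cons, List.map_nil,
    show Hw''[0]? = some (Op.read 3 0 (some 0)) from rfl,
    show Hw''[1]? = some (Op.write 2 0 1) from rfl,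
    show Hw''[2]? = some (Op.tryCommit 2 true) from rfl,
    show Hw''[3]? = some (Op.write 3 1 1) from rfl,
    show Hw''[4]? = some (Op.tryCommit 3 true) from rfl]
  have c0 : ¬(incomplete Hw'' ((Op.read 3 0 (some 0) : Op ℕ ℕ)).txn ∧
      ∀ (j : ℕ) (b : Op ℕ ℕ), 0 < j → Hw''[j]? = some b → b.txn ≠ ((Op.read 3 0 (some 0) : Op ℕ ℕ)).txn) :=
    fun h => absurd h.1 (by decide)
  have c1 : ¬(incomplete Hw'' ((Op.write 2 0 1 : Op ℕ ℕ)).txn ∧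
      ∀ (j : ℕ) (b : Op ℕ ℕ), 1 < j → Hw''[j]? = some b → b.txn ≠ ((Op.write 2 0 1 : Op ℕ ℕ)).txn) :=
    fun h => absurd h.1 (by decide)
  have c2 : ¬(incomplete Hw'' ((Op.tryCommit 2 true : Op ℕ ℕ)).txn ∧
      ∀ (j : ℕ) (b : Op ℕ ℕ), 2 < j → Hw''[j]? = some b → b.txn ≠ ((Op.tryCommit 2 true : Op ℕ ℕ)).txn) :=
    fun h => absurd h.1 (by decide)
  have c3 : ¬(incomplete Hw'' ((Op.write 3 1 1 : Op ℕ ℕ)).txn ∧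
      ∀ (j : ℕ) (b : Op ℕ ℕ), 3 < j → Hw''[j]? = some b → b.txn ≠ ((Op.write 3 1 1 : Op ℕ ℕ)).txn) :=
    fun h => absurd h.1 (by decide)
  have c4 : ¬(incomplete Hw'' ((Op.tryCommit 3 true : Op ℕ ℕ)).txn ∧
      ∀ (j : ℕ) (b : Op ℕ ℕ), 4 < j → Hw''[j]? = some b → b.txn ≠ ((Op.tryCommit 3 true : Op ℕ ℕ)).txn) :=
    fun h => absurd h.1 (by decide)
  rw [if_neg c0, if_neg c1, if_neg c2, if_neg c3, if_neg c4]
  rfl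

lemma validHw : validH Hw := by
  intro j t x v hj
  have hj7 : j < 7 := by
    have := (List.getElem?_eq_some_iff.1 hj).1
    simpa [Hw] using this
  interval_cases j <;> simp [Hw] at hj
  · obtain ⟨rfl, rfl, rfl⟩ := hj
    exact Or.inr rfl
  · obtain ⟨rfl, rfl, rfl⟩ := hj
    exact Or.inl ⟨2, 2, by omega, rfl, by simp [Hw]⟩
  · obtain ⟨rfl, rfl, rfl⟩ := hj
    exact Or.inr rfl

lemma legalSHw : legalH SHw := by
  intro j t x v hj
  have hj8 : j < 8 := by
    have := (List.getElem?_eq_some_iff.1 hj).1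
    simpa [SHw] using this
  interval_cases j <;> simp [SHw] at hj
  · -- j = 0 : read 3 0 (some 0)
    obtain ⟨rfl, rfl, rfl⟩ := hj
    exact Or.inr ⟨fun i u hi _ => absurd hi (by omega), rfl⟩
  · -- j = 5 : read 4 0 (some 1)
    obtain ⟨rfl, rfl, rfl⟩ := hj
    refine Or.inl ⟨4, 2, by omega, rfl, ⟨1, by simp [SHw]⟩, by simp [SHw], ?_⟩
    intro i' u' h4 h5
    omega
  · -- j = 6 : read 4 1 (some 0)
    obtain ⟨rfl, rfl, rfl⟩ := hj
    refine Or.inr ⟨?_, rfl⟩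
    intro i u hi hc
    interval_cases i <;> simp [SHw] at hc
    obtain rfl := hc
    rintro ⟨w, hw⟩
    simp [SHw] at hw

lemma opaqueHw : opaqueH Hw := by
  refine ⟨validHw, SHw, ?_, ?_, legalSHw, ?_⟩
  · rw [compHw]; unfold equivalentH; decide
  · rw [tSequential_iff]; decide
  · rw [respectsRT_iff]; decide

lemma legalSHw'' : legalH SHw'' := by
  intro j t x v hj
  have hj5 : j < 5 := by
    have := (List.getElem?_eq_some_iff.1 hj).1
    simpa [SHw''] using this
  interval_cases j <;> simp [SHw''] at hj
  obtain ⟨rfl, rfl, rfl⟩ := hj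
  exact Or.inr ⟨fun i u hi _ => absurd hi (by omega), rfl⟩

lemma validHw'' : validH Hw'' := by
  intro j t x v hj
  have hj5 : j < 5 := by
    have := (List.getElem?_eq_some_iff.1 hj).1
    simpa [Hw''] using this
  interval_cases j <;> simp [Hw''] at hj
  obtain ⟨rfl, rfl, rfl⟩ := hj
  exact Or.inr rfl

lemma opaqueHw'' : opaqueH Hw'' := by
  refine ⟨validHw'', SHw'', ?_, ?_, legalSHw'', ?_⟩
  · rw [compHw'']; unfold equivalentH; decide
  · rw [tSequential_iff]; decide
  · rw [respectsRT_iff]; decide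


lemma notOpaqueHw' : ¬ opaqueH Hw' := by
  rintro ⟨-, S, hequiv, hseq, hlegal, hrt⟩
  have hmemS : ∀ o ∈ Hw', o ∈ S := fun o ho =>
    hequiv.mem_iff.2 (mem_completion_of_mem ho)
  -- no write of value 0 occurs in S
  have hnw : ∀ (u z : ℕ), Op.write u z 0 ∉ S := by
    intro u z hm
    rcases of_mem_completion (hequiv.mem_iff.1 hm) with h | ⟨t, ht⟩
    · simp [Hw'] at h
    · exact absurd ht (by simp)
  -- positions of key events in S
  obtain ⟨i2, hi2⟩ := List.getElem?_of_mem (hmemS _ (show (Op.tryCommit 2 true : Op ℕ ℕ) ∈ Hw' by decide))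
  obtain ⟨i3, hi3⟩ := List.getElem?_of_mem (hmemS _ (show (Op.tryCommit 3 true : Op ℕ ℕ) ∈ Hw' by decide))
  obtain ⟨p3, hp3⟩ := List.getElem?_of_mem (hmemS _ (show (Op.read 3 0 (some 0) : Op ℕ ℕ) ∈ Hw' by decide))
  obtain ⟨p4, hp4⟩ := List.getElem?_of_mem (hmemS _ (show (Op.read 4 1 (some 0) : Op ℕ ℕ) ∈ Hw' by decide))
  -- T3 writes object 1, T2 writes object 0 in S
  have hw31 : writesTo S 3 1 := ⟨1, hmemS _ (by decide)⟩
  have hw20 : writesTo S 2 0 := ⟨1, hmemS _ (by decide)⟩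
  -- legality of the read r4(y,0): T3's commit cannot be before it
  have h43 : ¬ i3 < p4 := by
    rcases hlegal _ _ _ _ hp4 with ⟨i, u, -, -, -, hw, -⟩ | ⟨hall, -⟩
    · exact absurd hw (hnw u 1)
    · exact fun h => hall i3 3 h hi3 hw31
  -- legality of the read r3(x,0): T2's commit cannot be before it
  have h32 : ¬ i2 < p3 := by
    rcases hlegal _ _ _ _ hp3 with ⟨i, u, -, -, -, hw, -⟩ | ⟨hall, -⟩
    · exact absurd hw (hnw u 0)
    · exact fun h => hall i2 2 h hi2 hw20
  -- real-time order: T2 precedes T4 in Hw', hence in S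
  have h24 : rtPrec Hw' 2 4 := by rw [rtPrec_iff]; decide
  have h24S := hrt 2 4 h24
  have hi2p4 : i2 < p4 := h24S.2.2.2 i2 p4 _ _ hi2 rfl hp4 rfl
  -- t-sequentiality of S relates T2 and T3
  rcases hseq 2 ⟨_, hmemS _ (by decide : (Op.tryCommit 2 true : Op ℕ ℕ) ∈ Hw'), rfl⟩
      3 ⟨_, hmemS _ (by decide : (Op.tryCommit 3 true : Op ℕ ℕ) ∈ Hw'), rfl⟩ (by decide) with h | h
  · exact h32 (h.2.2.2 i2 p3 _ _ hi2 rfl hp3 rfl)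
  · have : i3 < i2 := h.2.2.2 i3 i2 _ _ hi3 rfl hi2 rfl
    omega


lemma prefixHw : prefixUpTo Hw 3 = Hw := by
  unfold prefixUpTo
  have hc : (@decide ((Op.tryCommit 3 false : Op ℕ ℕ).txn = 3) (Classical.propDecidable _)) = true :=
    @decide_eq_true _ (Classical.propDecidable _) rfl
  have h0 : (List.findIdx (fun o => @decide (o.txn = 3) (Classical.propDecidable _))
      (List.reverse Hw)) = 0 := by
    rw [show Hw.reverse = Op.tryCommit 3 false :: Hw.reverse.tail from rfl, List.findIdx_cons, hc]
    rfl
  rw [h0]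
  rfl

lemma htcHw : ∀ H' ∈ HTC Hw 3, H' = Hw' := by
  rintro H' ⟨pre, o, o', hdec, hto, hcv, rfl⟩
  rw [prefixHw] at hdec
  have hlast : Hw.getLast? = some o := by rw [hdec]; simp
  have ho : o = Op.tryCommit 3 false := by
    rw [show Hw.getLast? = some (Op.tryCommit 3 false) from rfl] at hlast
    exact (Option.some_inj.1 hlast).symm
  subst ho
  have hpre : pre = Hw.dropLast := by rw [hdec]; simp
  obtain rfl : o' = Op.tryCommit 3 true := hcv
  rw [hpre]
  rfl

lemma abortedHw : ∀ t, aborted Hw t → t = 3 := by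
  rintro t ⟨o, ho, rfl, hab⟩
  simp [Hw] at ho
  rcases ho with rfl | rfl | rfl | rfl | rfl | rfl | rfl <;>
    first | rfl | exact hab.elim

lemma removeHw' : removeTxns Hw' {4} = Hw'' := by
  unfold removeTxns Hw' Hw''
  simp [List.filter, Op.txn]

lemma prevAbHw : ({4} : Set ℕ) ⊆ prevAb Hw 3 := by
  rintro u rfl
  right
  rw [prefixHw]
  decide


lemma removeTxns_empty (H : History ℕ ℕ) : removeTxns H (∅ : Set ℕ) = H := by
  unfold removeTxns
  rw [List.filter_eq_self]
  intro a _
  exact @decide_eq_true _ (@instDecidableNot _ (Classical.propDecidable _)) (Set.notMem_empty _)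

lemma abortedHw3 : aborted Hw 3 := ⟨Op.tryCommit 3 false, by simp [Hw], rfl, trivial⟩

lemma Hw'memHTC : Hw' ∈ HTC Hw 3 :=
  ⟨Hw.dropLast, Op.tryCommit 3 false, Op.tryCommit 3 true,
    by rw [prefixHw]; rfl, rfl, rfl, rfl⟩

lemma permHw : Hw ∈ permissive {K : History ℕ ℕ | opaqueH K} := by
  refine ⟨opaqueHw, fun t hab H' hH' => ?_⟩
  obtain rfl := abortedHw t hab
  rw [htcHw H' hH']
  exact notOpaqueHw'

lemma notNIHw : Hw ∉ nonInterfering {K : History ℕ ℕ | opaqueH K} := by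
  rintro ⟨-, hni⟩
  exact hni 3 abortedHw3 {4} prevAbHw Hw'' ⟨Hw', Hw'memHTC, removeHw'.symm⟩ opaqueHw''

end TM


/-- Non-interference w.r.t. opacity is strictly stronger than
permissiveness w.r.t. opacity: there is a history that is opacity-permissive but not
opacity-non-interfering; hence `NI(opacity)` is a strict subset of `Perm(opacity)`. -/
theorem ni_opacity_ssubset_perm_opacity :
    (∃ H : TM.History ℕ ℕ,
        H ∈ TM.permissive {K : TM.History ℕ ℕ | TM.opaqueH K} ∧
        H ∉ TM.nonInterfering {K : TM.History ℕ ℕ | TM.opaqueH K}) ∧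
    TM.nonInterfering {K : TM.History ℕ ℕ | TM.opaqueH K} ⊂
      TM.permissive {K : TM.History ℕ ℕ | TM.opaqueH K} := by
  refine ⟨⟨TM.Hw, TM.permHw, TM.notNIHw⟩, ?_, ?_⟩
  · intro H hH
    refine ⟨hH.1, fun t hab H' hH' => ?_⟩
    exact hH.2 t hab ∅ (by simp) H' ⟨H', hH', (TM.removeTxns_empty H').symm⟩
  · intro hsub
    exact TM.notNIHw (hsub TM.permHw)
end
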